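/- Lower bound of the free boundary in dimension two: Let c > 0 and let u be a viscosity solution of min{−(1/2)Δu + c, u − g} = 0 on ℝ² with at most linear growth, where g(x₁, x₂) = max{x₁, x₂, 0}. Then u(x₁, x₂) ≥ η_c((x₁ + x₂)/√2, (x₁ − x₂)/√2) for all (x₁, x₂) ∈ ℝ². Consequently, for every (x₁, x₂) with x₁ + x₂ ≥ 0 and |x₁ − x₂| < 1/(2c), one has u(x₁, x₂) > g(x₁, x₂); that is, in the half-plane x₁ + x₂ ≥ 0 the free boundary of u lies inside the set {|x₁ − x₂| ≥ 1/(2c)}. -/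

import Mathlib

open Filter MeasureTheory

noncomputable def lap {d : ℕ} (φ : EuclideanSpace ℝ (Fin d) → ℝ)
    (x : EuclideanSpace ℝ (Fin d)) : ℝ :=
  ∑ i : Fin d, iteratedFDeriv ℝ 2 φ x ![EuclideanSpace.single i 1, EuclideanSpace.single i 1]

noncomputable def gObst {d : ℕ} (x : EuclideanSpace ℝ (Fin d)) : ℝ :=
  max (⨆ i, x i) 0

def IsVSubsol {d : ℕ} (c : ℝ) (ψ : EuclideanSpace ℝ (Fin d) → ℝ)
    (Ω : Set (EuclideanSpace ℝ (Fin d))) (u : EuclideanSpace ℝ (Fin d) → ℝ) : Prop :=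
  ∀ x₀ ∈ Ω, ψ x₀ < u x₀ →
    ∀ φ : EuclideanSpace ℝ (Fin d) → ℝ, ContDiff ℝ 2 φ → φ x₀ = u x₀ →
      (∀ᶠ x in nhds x₀, u x ≤ φ x) → -(1 / 2 : ℝ) * lap φ x₀ + c ≤ 0

def IsVSupersol {d : ℕ} (c : ℝ) (ψ : EuclideanSpace ℝ (Fin d) → ℝ)
    (Ω : Set (EuclideanSpace ℝ (Fin d))) (u : EuclideanSpace ℝ (Fin d) → ℝ) : Prop :=
  (∀ x ∈ Ω, ψ x ≤ u x) ∧
  ∀ x₀ ∈ Ω, ∀ φ : EuclideanSpace ℝ (Fin d) → ℝ, ContDiff ℝ 2 φ → φ x₀ = u x₀ →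
    (∀ᶠ x in nhds x₀, φ x ≤ u x) → 0 ≤ -(1 / 2 : ℝ) * lap φ x₀ + c

def IsVSol {d : ℕ} (c : ℝ) (ψ : EuclideanSpace ℝ (Fin d) → ℝ)
    (Ω : Set (EuclideanSpace ℝ (Fin d))) (u : EuclideanSpace ℝ (Fin d) → ℝ) : Prop :=
  IsVSubsol c ψ Ω u ∧ IsVSupersol c ψ Ω u

def LinGrowth {d : ℕ} (ψ u : EuclideanSpace ℝ (Fin d) → ℝ) : Prop :=
  (∀ x, ψ x ≤ u x) ∧ ∃ C : ℝ, ∀ x, u x ≤ (∑ i, |x i|) + C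

noncomputable def etaS (θ t s : ℝ) : ℝ :=
  if |s| ≤ 1 / (2 * Real.sqrt 2 * θ) then
    t / Real.sqrt 2 + θ * s ^ 2 + 1 / (8 * θ)
  else (t + |s|) / Real.sqrt 2

-- ==== quadratic lemmas (proved in t2) ====
noncomputable abbrev Lsum : EuclideanSpace ℝ (Fin 2) →L[ℝ] ℝ :=
  EuclideanSpace.proj 0 + EuclideanSpace.proj 1
noncomputable abbrev Ldif : EuclideanSpace ℝ (Fin 2) →L[ℝ] ℝ :=
  EuclideanSpace.proj 0 - EuclideanSpace.proj 1
noncomputable def quadT (b g2 : ℝ) :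
    EuclideanSpace ℝ (Fin 2) →L[ℝ] (EuclideanSpace ℝ (Fin 2) →L[ℝ] ℝ) :=
  (2*b) • (Ldif.smulRight Ldif) + (2*g2) • (Lsum.smulRight Lsum)
lemma quad_hasFDerivAt (a b g2 k : ℝ) (x : EuclideanSpace ℝ (Fin 2)) :
    HasFDerivAt (fun y : EuclideanSpace ℝ (Fin 2) =>
      a * (y 0 + y 1) + b * ((y 0 - y 1) * (y 0 - y 1))
        + g2 * ((y 0 + y 1) * (y 0 + y 1)) + k)
      (a • Lsum + quadT b g2 x) x := by
  have hs : HasFDerivAt (fun y : EuclideanSpace ℝ (Fin 2) => y 0 + y 1) Lsum x :=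
    Lsum.hasFDerivAt
  have hd : HasFDerivAt (fun y : EuclideanSpace ℝ (Fin 2) => y 0 - y 1) Ldif x :=
    Ldif.hasFDerivAt
  have h := (((hs.const_mul a).add ((hd.mul hd).const_mul b)).add
    ((hs.mul hs).const_mul g2)).add_const k
  refine h.congr_fderiv ?_
  ext v
  simp [quadT, Lsum, Ldif]
  ring
lemma quad_fderiv2 (a b g2 k : ℝ) (x : EuclideanSpace ℝ (Fin 2)) :
    fderiv ℝ (fderiv ℝ (fun y : EuclideanSpace ℝ (Fin 2) =>
      a * (y 0 + y 1) + b * ((y 0 - y 1) * (y 0 - y 1))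
        + g2 * ((y 0 + y 1) * (y 0 + y 1)) + k)) x = quadT b g2 := by
  have h1 : fderiv ℝ (fun y : EuclideanSpace ℝ (Fin 2) =>
      a * (y 0 + y 1) + b * ((y 0 - y 1) * (y 0 - y 1))
        + g2 * ((y 0 + y 1) * (y 0 + y 1)) + k)
      = fun z => a • Lsum + quadT b g2 z := by
    funext z; exact (quad_hasFDerivAt a b g2 k z).fderiv
  rw [h1]
  exact (((quadT b g2).hasFDerivAt (x := x)).const_add (a • Lsum)).fderiv
lemma quad_lap (a b g2 k : ℝ) (x : EuclideanSpace ℝ (Fin 2)) :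
    lap (fun y : EuclideanSpace ℝ (Fin 2) =>
      a * (y 0 + y 1) + b * ((y 0 - y 1) * (y 0 - y 1))
        + g2 * ((y 0 + y 1) * (y 0 + y 1)) + k) x = 4*b + 4*g2 := by
  unfold lap
  rw [Fin.sum_univ_two]
  rw [iteratedFDeriv_two_apply, iteratedFDeriv_two_apply, quad_fderiv2]
  simp [quadT, Lsum, Ldif, EuclideanSpace.single_apply]
  ring
lemma quad_contDiff (a b g2 k : ℝ) :
    ContDiff ℝ 2 (fun y : EuclideanSpace ℝ (Fin 2) =>
      a * (y 0 + y 1) + b * ((y 0 - y 1) * (y 0 - y 1))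
        + g2 * ((y 0 + y 1) * (y 0 + y 1)) + k) := by
  have hs : ContDiff ℝ 2 (fun y : EuclideanSpace ℝ (Fin 2) => y 0 + y 1) := Lsum.contDiff
  have hd : ContDiff ℝ 2 (fun y : EuclideanSpace ℝ (Fin 2) => y 0 - y 1) := Ldif.contDiff
  exact (((contDiff_const.mul hs).add (contDiff_const.mul (hd.mul hd))).add
    (contDiff_const.mul (hs.mul hs))).add contDiff_const

-- ==== etaS lemmas (proved in t3) ====
lemma rt2_pos : (0:ℝ) < Real.sqrt 2 := by positivity
lemma rt2_sq : (Real.sqrt 2) ^ 2 = 2 := Real.sq_sqrt (by norm_num)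
lemma par_key {θ : ℝ} (hθ : 0 < θ) (s : ℝ) :
    θ * (1 / (2 * Real.sqrt 2 * θ) - |s|) ^ 2
      = 1 / (8 * θ) - |s| / Real.sqrt 2 + θ * s ^ 2 := by
  have hr := rt2_pos
  have hr2 := rt2_sq
  have h8 : (2 * Real.sqrt 2 * θ) ^ 2 = 8 * θ ^ 2 := by
    rw [mul_pow, mul_pow, hr2]; ring
  have e1 : θ * (1 / (2 * Real.sqrt 2 * θ)) ^ 2 = 1 / (8 * θ) := by
    rw [div_pow, one_pow, h8]; field_simp
  have e2 : 2 * θ * (1 / (2 * Real.sqrt 2 * θ)) * |s| = |s| / Real.sqrt 2 := by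
    field_simp
  have hs2 : |s| ^ 2 = s ^ 2 := sq_abs s
  nlinarith [e1, e2, hs2]
lemma etaS_eq {θ : ℝ} (hθ : 0 < θ) (t s : ℝ) :
    etaS θ t s = (t + |s|) / Real.sqrt 2
      + θ * (max (1 / (2 * Real.sqrt 2 * θ) - |s|) 0) ^ 2 := by
  unfold etaS
  split_ifs with h
  · rw [max_eq_left (by linarith), par_key hθ, add_div]
    ring
  · rw [max_eq_right (by push_neg at h; linarith)]
    ring
lemma etaS_mono {c θ : ℝ} (hc : 0 < c) (hθ : c < θ) (t s : ℝ) :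
    etaS c t s ≤ etaS θ t s + (1 / (8 * c) - 1 / (8 * θ)) := by
  have hr := rt2_pos
  have hr2 := rt2_sq
  have hθ0 : (0:ℝ) < θ := lt_trans hc hθ
  have hdd : 1 / (2 * Real.sqrt 2 * θ) ≤ 1 / (2 * Real.sqrt 2 * c) := by
    apply one_div_le_one_div_of_le (by positivity)
    nlinarith
  unfold etaS
  split_ifs with h1 h2 h2
  · nlinarith [sq_nonneg s]
  · push_neg at h2
    have hy0 : 0 ≤ |s| := abs_nonneg s
    set y := |s| with hy
    have h3 : (0:ℝ) ≤ (1 / (2 * Real.sqrt 2 * c) - y) * (y - 1 / (2 * Real.sqrt 2 * θ)) :=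
      mul_nonneg (by linarith) (by linarith)
    have h5 : c * y ^ 2 + c * (1 / (2 * Real.sqrt 2 * c)) * (1 / (2 * Real.sqrt 2 * θ))
        ≤ c * (1 / (2 * Real.sqrt 2 * c)) * y + c * (1 / (2 * Real.sqrt 2 * θ)) * y := by
      nlinarith [mul_nonneg hc.le h3]
    have e2 : c * (1 / (2 * Real.sqrt 2 * c)) * (1 / (2 * Real.sqrt 2 * θ))
        = 1 / (8 * θ) := by
      field_simp
      linear_combination (-4) * rt2_sq
    have e1y : c * (1 / (2 * Real.sqrt 2 * c)) * y = y / (2 * Real.sqrt 2) := by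
      field_simp
    have e3y : c * (1 / (2 * Real.sqrt 2 * θ)) * y ≤ y / (2 * Real.sqrt 2) := by
      have hb : c * (1 / (2 * Real.sqrt 2 * θ)) ≤ 1 / (2 * Real.sqrt 2) := by
        rw [mul_one_div, div_le_div_iff₀ (by positivity) (by positivity)]
        nlinarith
      calc c * (1 / (2 * Real.sqrt 2 * θ)) * y ≤ (1 / (2 * Real.sqrt 2)) * y :=
            mul_le_mul_of_nonneg_right hb hy0
        _ = y / (2 * Real.sqrt 2) := by ring
    have e4 : y / (2 * Real.sqrt 2) + y / (2 * Real.sqrt 2) = y / Real.sqrt 2 := by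
      field_simp; ring
    have key : c * s ^ 2 + 1 / (8 * θ) ≤ y / Real.sqrt 2 := by
      have hs2 : s ^ 2 = y ^ 2 := (sq_abs s).symm
      rw [hs2]; linarith
    have hsplit : (t + y) / Real.sqrt 2 = t / Real.sqrt 2 + y / Real.sqrt 2 := add_div t y _
    linarith
  · exact absurd (le_trans h2 hdd) h1
  · have : 1 / (8 * θ) ≤ 1 / (8 * c) := by
      apply one_div_le_one_div_of_le (by positivity); linarith
    linarith

-- ==== gObst lemmas ====
lemma gObst_eq (x : EuclideanSpace ℝ (Fin 2)) :
    gObst x = max (max (x 0) (x 1)) 0 := by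
  unfold gObst
  congr 1
  apply le_antisymm
  · exact ciSup_le fun i => by fin_cases i <;> simp [le_max_left, le_max_right]
  · have hb : BddAbove (Set.range fun i : Fin 2 => x i) :=
      Set.Finite.bddAbove (Set.finite_range _)
    exact max_le (le_ciSup hb 0) (le_ciSup hb 1)

lemma exists_min_closedBall (w : EuclideanSpace ℝ (Fin 2) → ℝ) (hw : Continuous w)
    (R : ℝ) (hR : 0 ≤ R) :
    ∃ x₀ ∈ Metric.closedBall (0 : EuclideanSpace ℝ (Fin 2)) R,
      ∀ y ∈ Metric.closedBall (0 : EuclideanSpace ℝ (Fin 2)) R, w x₀ ≤ w y := by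
  obtain ⟨x₀, hx₀, hmin⟩ := (isCompact_closedBall (0 : EuclideanSpace ℝ (Fin 2)) R).exists_isMinOn
    ⟨0, Metric.mem_closedBall_self hR⟩ hw.continuousOn
  exact ⟨x₀, hx₀, fun y hy => hmin hy⟩

lemma max_as_half (a b : ℝ) : max a b = (a + b + |a - b|) / 2 := by
  rcases le_total a b with h | h
  · rw [max_eq_right h, abs_of_nonpos (by linarith)]; ring
  · rw [max_eq_left h, abs_of_nonneg (by linarith)]; ring

-- ==== main comparison lemma ====
set_option maxHeartbeats 2000000 in
lemma step_lemma (c : ℝ) (hc : 0 < c) (u : EuclideanSpace ℝ (Fin 2) → ℝ)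
    (hucont : Continuous u) (hsup : IsVSupersol c gObst Set.univ u)
    (θ : ℝ) (hθ : c < θ) (x : EuclideanSpace ℝ (Fin 2)) :
    etaS θ ((x 0 + x 1) / Real.sqrt 2) ((x 0 - x 1) / Real.sqrt 2) ≤ u x := by
  by_contra hlt
  push_neg at hlt
  have hr : (0:ℝ) < Real.sqrt 2 := rt2_pos
  have hr2 : (Real.sqrt 2) ^ 2 = 2 := rt2_sq
  have hrr : Real.sqrt 2 * Real.sqrt 2 = 2 := by nlinarith
  have hθ0 : (0:ℝ) < θ := lt_trans hc hθ
  set δ := 1 / (2 * Real.sqrt 2 * θ) with hδdef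
  have hδ : 0 < δ := by positivity
  set S : EuclideanSpace ℝ (Fin 2) → ℝ := fun y => (y 0 - y 1) / Real.sqrt 2 with hSdef
  have hSabs : ∀ y, |S y| = |y 0 - y 1| / Real.sqrt 2 := by
    intro y; rw [hSdef]; rw [abs_div, abs_of_pos hr]
  set v : EuclideanSpace ℝ (Fin 2) → ℝ :=
    fun y => max (y 0) (y 1) + θ * (max (δ - |S y|) 0) ^ 2 with hvdef
  -- v is the rotated etaS
  have hv : ∀ y : EuclideanSpace ℝ (Fin 2),
      etaS θ ((y 0 + y 1) / Real.sqrt 2) (S y) = v y := by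
    intro y
    rw [etaS_eq hθ0, hvdef]
    have h1 : ((y 0 + y 1) / Real.sqrt 2 + |S y|) / Real.sqrt 2 = max (y 0) (y 1) := by
      rw [hSabs y, max_as_half, ← add_div, div_div, hrr]
    rw [← hδdef, h1]
  -- the parabolic branch formula
  have hveq : ∀ y : EuclideanSpace ℝ (Fin 2), |S y| ≤ δ →
      v y = (1/2) * (y 0 + y 1) + (θ/2) * ((y 0 - y 1) * (y 0 - y 1)) + 1 / (8 * θ) := by
    intro y hy
    rw [hvdef]
    simp only
    rw [show max (δ - |S y|) 0 = δ - |S y| from max_eq_left (by linarith), hδdef,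
      par_key hθ0 (S y)]
    have e1 : |S y| / Real.sqrt 2 = |y 0 - y 1| / 2 := by
      rw [hSabs y, div_div, hrr]
    have e2 : (S y) ^ 2 = (y 0 - y 1) ^ 2 / 2 := by
      rw [hSdef]; simp only; rw [div_pow, hr2]
    rw [max_as_half (y 0) (y 1), e1, e2]
    ring
  have hug : ∀ y, gObst y ≤ u y := fun y => hsup.1 y trivial
  have hmaxg : ∀ y : EuclideanSpace ℝ (Fin 2), max (y 0) (y 1) ≤ gObst y := by
    intro y; rw [gObst_eq]; exact le_max_left _ _
  have hM0 : ∀ y : EuclideanSpace ℝ (Fin 2), 0 ≤ max (δ - |S y|) 0 := fun y => le_max_right _ _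
  have hMδ : ∀ y : EuclideanSpace ℝ (Fin 2), max (δ - |S y|) 0 ≤ δ := by
    intro y
    exact max_le (by linarith [abs_nonneg (S y)]) hδ.le
  have hvle : ∀ y, v y ≤ gObst y + θ * δ ^ 2 := by
    intro y
    have : (max (δ - |S y|) 0) ^ 2 ≤ δ ^ 2 := pow_le_pow_left₀ (hM0 y) (hMδ y) 2
    have h2 : θ * (max (δ - |S y|) 0) ^ 2 ≤ θ * δ ^ 2 := by nlinarith
    have := hmaxg y
    rw [hvdef]; simp only; linarith
  have hstrict : ∀ y, max (y 0) (y 1) < v y → |S y| < δ := by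
    intro y hy
    by_contra h
    push_neg at h
    rw [hvdef] at hy
    simp only at hy
    rw [show max (δ - |S y|) 0 = 0 from max_eq_right (by linarith)] at hy
    simp at hy
  -- setup of penalized minimization
  rw [hv] at hlt
  set m := v x - u x with hm
  have hm0 : 0 < m := by rw [hm]; linarith
  set ρ : EuclideanSpace ℝ (Fin 2) → ℝ := fun y => (y 0 + y 1) * (y 0 + y 1) with hρdef
  have hρ0 : ∀ y, 0 ≤ ρ y := fun y => mul_self_nonneg _
  set ε := min ((θ - c)/4) (m / (2 * (ρ x + 1))) with hεdef
  have hε0 : 0 < ε := by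
    apply lt_min (by linarith)
    have := hρ0 x
    positivity
  have hε1 : ε ≤ (θ - c)/4 := min_le_left _ _
  have hε2 : ε * ρ x < m := by
    have h1 : ε * ρ x ≤ (m / (2 * (ρ x + 1))) * ρ x :=
      mul_le_mul_of_nonneg_right (min_le_right _ _) (hρ0 x)
    have h2 : (m / (2 * (ρ x + 1))) * ρ x < m := by
      rw [div_mul_eq_mul_div, div_lt_iff₀ (by nlinarith [hρ0 x])]
      nlinarith [hρ0 x]
    linarith
  set w : EuclideanSpace ℝ (Fin 2) → ℝ := fun y => u y - v y + ε * ρ y with hwdef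
  have hwx : w x < 0 := by
    have hwe : w x = u x - v x + ε * ρ x := rfl
    rw [hwe]; linarith [hε2]
  -- continuity
  have c0 : Continuous (fun y : EuclideanSpace ℝ (Fin 2) => y 0) :=
    (EuclideanSpace.proj (0 : Fin 2) : EuclideanSpace ℝ (Fin 2) →L[ℝ] ℝ).continuous
  have c1 : Continuous (fun y : EuclideanSpace ℝ (Fin 2) => y 1) :=
    (EuclideanSpace.proj (1 : Fin 2) : EuclideanSpace ℝ (Fin 2) →L[ℝ] ℝ).continuous
  have hScont : Continuous S := (c0.sub c1).div_const _
  have hvcont : Continuous v := by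
    apply (c0.max c1).add
    exact continuous_const.mul (((continuous_const.sub hScont.abs).max continuous_const).pow 2)
  have hρcont : Continuous ρ := (c0.add c1).mul (c0.add c1)
  have hwcont : Continuous w := (hucont.sub hvcont).add (continuous_const.mul hρcont)
  -- sublevel set bounds
  have hKey : ∀ y, w y < 0 → |S y| < δ ∧ ε * ρ y ≤ θ * δ ^ 2 := by
    intro y hy
    rw [hwdef] at hy
    simp only at hy
    have h1 : max (y 0) (y 1) < v y := by
      have := hug y; have := hmaxg y; have := hρ0 y
      nlinarith [hε0]
    refine ⟨hstrict y h1, ?_⟩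
    have := hug y; have := hvle y
    linarith
  set B := (θ * δ ^ 2 / ε + 2 * δ ^ 2) / 2 + 1 with hBdef
  have hnorm : ∀ y, w y < 0 → ‖y‖ ≤ Real.sqrt B := by
    intro y hy
    obtain ⟨hy1, hy2⟩ := hKey y hy
    have hd2 : (y 0 - y 1) ^ 2 ≤ 2 * δ ^ 2 := by
      rw [hSabs] at hy1
      rw [div_lt_iff₀ hr] at hy1
      nlinarith [abs_nonneg (y 0 - y 1), sq_abs (y 0 - y 1)]
    have hq : (y 0 + y 1) ^ 2 ≤ θ * δ ^ 2 / ε := by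
      rw [le_div_iff₀ hε0]
      have hy2' : ε * ((y 0 + y 1) * (y 0 + y 1)) ≤ θ * δ ^ 2 := hy2
      nlinarith [hy2']
    have hsum : ∑ i, ‖y i‖ ^ 2 = (y 0) ^ 2 + (y 1) ^ 2 := by
      rw [Fin.sum_univ_two, Real.norm_eq_abs, Real.norm_eq_abs, sq_abs, sq_abs]
    rw [EuclideanSpace.norm_eq, hsum]
    apply Real.sqrt_le_sqrt
    have e5 : (y 0) ^ 2 + (y 1) ^ 2 ≤ (θ * δ ^ 2 / ε + 2 * δ ^ 2) / 2 := by
      nlinarith [hd2, hq]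
    rw [hBdef]
    linarith
  set R := Real.sqrt B + ‖x‖ + 1 with hRdef
  have hsB : 0 ≤ Real.sqrt B := Real.sqrt_nonneg B
  have hR0 : 0 ≤ R := by rw [hRdef]; have := norm_nonneg x; linarith
  obtain ⟨x₀, hx₀K, hminle⟩ := exists_min_closedBall w hwcont R hR0
  have hxK : x ∈ Metric.closedBall (0 : EuclideanSpace ℝ (Fin 2)) R := by
    rw [Metric.mem_closedBall, dist_zero_right, hRdef]; linarith
  have hw0 : w x₀ < 0 := lt_of_le_of_lt (hminle x hxK) hwx
  obtain ⟨hS0, _⟩ := hKey x₀ hw0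
  have hx₀R : ‖x₀‖ < R := by
    have := hnorm x₀ hw0
    rw [hRdef]
    have := norm_nonneg x
    linarith
  -- test function
  set k : ℝ := 1 / (8 * θ) + (u x₀ - v x₀ + ε * ρ x₀) with hkdef
  set φ : EuclideanSpace ℝ (Fin 2) → ℝ := fun y =>
    (1/2) * (y 0 + y 1) + (θ/2) * ((y 0 - y 1) * (y 0 - y 1))
      + (-ε) * ((y 0 + y 1) * (y 0 + y 1)) + k with hφdef
  have hφx₀ : φ x₀ = u x₀ := by
    have e : φ x₀ = 1/2 * (x₀ 0 + x₀ 1) + θ/2 * ((x₀ 0 - x₀ 1) * (x₀ 0 - x₀ 1))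
        + -ε * ((x₀ 0 + x₀ 1) * (x₀ 0 + x₀ 1))
        + (1 / (8 * θ) + (u x₀ - v x₀ + ε * ((x₀ 0 + x₀ 1) * (x₀ 0 + x₀ 1)))) := rfl
    have h1 := hveq x₀ hS0.le
    rw [e]
    linarith
  have hUnhds : {y : EuclideanSpace ℝ (Fin 2) | |S y| < δ} ∩ Metric.ball 0 R ∈ nhds x₀ := by
    apply Filter.inter_mem
    · exact (isOpen_lt hScont.abs continuous_const).mem_nhds hS0
    · exact Metric.isOpen_ball.mem_nhds (by rwa [Metric.mem_ball, dist_zero_right])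
  have hφle : ∀ᶠ y in nhds x₀, φ y ≤ u y := by
    filter_upwards [hUnhds] with y hy
    have h1 := hveq y hy.1.le
    have h2 : u x₀ - v x₀ + ε * ((x₀ 0 + x₀ 1) * (x₀ 0 + x₀ 1))
        ≤ u y - v y + ε * ((y 0 + y 1) * (y 0 + y 1)) :=
      hminle y (Metric.ball_subset_closedBall hy.2)
    have e : φ y = 1/2 * (y 0 + y 1) + θ/2 * ((y 0 - y 1) * (y 0 - y 1))
        + -ε * ((y 0 + y 1) * (y 0 + y 1))
        + (1 / (8 * θ) + (u x₀ - v x₀ + ε * ((x₀ 0 + x₀ 1) * (x₀ 0 + x₀ 1)))) := rfl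
    rw [e]
    clear_value φ k R B w ε ρ m v S δ
    linarith
  have hfinal := hsup.2 x₀ trivial φ (by rw [hφdef]; exact quad_contDiff (1/2) (θ/2) (-ε) k)
    hφx₀ hφle
  rw [hφdef] at hfinal
  rw [quad_lap (1/2) (θ/2) (-ε) k x₀] at hfinal
  linarith


set_option maxHeartbeats 1000000 in
/-- Lower bound of the free boundary in dimension two. -/
theorem lower_bound_free_boundary_dim_two (c : ℝ) (hc : 0 < c)
    (u : EuclideanSpace ℝ (Fin 2) → ℝ) (hucont : Continuous u)
    (hu : IsVSol c gObst Set.univ u) (hgrowth : LinGrowth gObst u) :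
    (∀ x : EuclideanSpace ℝ (Fin 2),
        etaS c ((x 0 + x 1) / Real.sqrt 2) ((x 0 - x 1) / Real.sqrt 2) ≤ u x) ∧
      ∀ x : EuclideanSpace ℝ (Fin 2),
        0 ≤ x 0 + x 1 → |x 0 - x 1| < 1 / (2 * c) → gObst x < u x := by
  have hr : (0:ℝ) < Real.sqrt 2 := rt2_pos
  have hr2 : (Real.sqrt 2) ^ 2 = 2 := rt2_sq
  have part1 : ∀ x : EuclideanSpace ℝ (Fin 2),
      etaS c ((x 0 + x 1) / Real.sqrt 2) ((x 0 - x 1) / Real.sqrt 2) ≤ u x := by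
    intro x
    by_contra h
    push_neg at h
    set t := (x 0 + x 1) / Real.sqrt 2 with htdef
    set s := (x 0 - x 1) / Real.sqrt 2 with hsdef
    set d := etaS c t s - u x with hddef
    have hd : 0 < d := by rw [hddef]; linarith
    set θ := c + min 1 (4 * c ^ 2 * d) with hθdef
    have hmin0 : 0 < min 1 (4 * c ^ 2 * d) := lt_min one_pos (by positivity)
    have hθ : c < θ := by rw [hθdef]; linarith
    have hθ0 : 0 < θ := lt_trans hc hθ
    have h1 := step_lemma c hc u hucont hu.2 θ hθ x
    have h2 := etaS_mono hc hθ t s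
    have e1 : 1 / (8 * c) - 1 / (8 * θ) = (θ - c) / (8 * c * θ) := by
      field_simp
    have e2 : (θ - c) / (8 * c * θ) ≤ (θ - c) / (8 * c * c) :=
      div_le_div_of_nonneg_left (by linarith) (by positivity) (by nlinarith)
    have e3 : (θ - c) / (8 * c * c) ≤ (4 * c ^ 2 * d) / (8 * c * c) := by
      apply div_le_div_of_nonneg_right ?_ (by positivity)
      · rw [hθdef]; simp [min_le_right]
    have e4 : (4 * c ^ 2 * d) / (8 * c * c) = d / 2 := by
      field_simp; ring
    rw [hddef] at *
    linarith
  refine ⟨part1, ?_⟩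
  intro x hx1 hx2
  have h1 := part1 x
  set A := |x 0 - x 1| with hAdef
  have hA0 : 0 ≤ A := abs_nonneg _
  set β := 1 / (2 * c) with hβdef
  have hβ0 : 0 < β := by positivity
  have hcβ : c * β = 1/2 := by rw [hβdef]; field_simp
  have hb2 : 1 / (8 * c) = c * β ^ 2 / 2 := by rw [hβdef]; field_simp; ring
  have hs_abs : |(x 0 - x 1) / Real.sqrt 2| = A / Real.sqrt 2 := by
    rw [abs_div, abs_of_pos hr, hAdef]
  have hs_le : |(x 0 - x 1) / Real.sqrt 2| ≤ 1 / (2 * Real.sqrt 2 * c) := by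
    rw [hs_abs]
    rw [div_le_div_iff₀ hr (by positivity)]
    calc A * (2 * Real.sqrt 2 * c) ≤ β * (2 * Real.sqrt 2 * c) := by
          apply mul_le_mul_of_nonneg_right (le_of_lt hx2) (by positivity)
      _ = 1 * Real.sqrt 2 := by rw [hβdef]; field_simp
  have hval : etaS c ((x 0 + x 1) / Real.sqrt 2) ((x 0 - x 1) / Real.sqrt 2)
      = (x 0 + x 1) / Real.sqrt 2 / Real.sqrt 2 + c * ((x 0 - x 1) / Real.sqrt 2) ^ 2
        + 1 / (8 * c) := by
    unfold etaS
    rw [if_pos hs_le]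
  have ht2 : (x 0 + x 1) / Real.sqrt 2 / Real.sqrt 2 = (x 0 + x 1) / 2 := by
    rw [div_div]
    congr 1
    nlinarith
  have hsq : ((x 0 - x 1) / Real.sqrt 2) ^ 2 = A ^ 2 / 2 := by
    rw [div_pow, hr2, hAdef, sq_abs]
  rw [hval, ht2, hsq] at h1
  rw [gObst_eq]
  have hβA : 0 < β - A := by rw [hβdef]; linarith
  have hkey : (x 0 + x 1) / 2 + A / 2 < (x 0 + x 1) / 2 + c * (A ^ 2 / 2) + 1 / (8 * c) := by
    have hp : 0 < c * (β - A) ^ 2 := mul_pos hc (pow_pos hβA 2)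
    have h3 : c * β * A = A / 2 := by rw [hcβ]; ring
    nlinarith [hp, h3, hb2]
  have hmax : max (x 0) (x 1) = (x 0 + x 1) / 2 + A / 2 := by
    rw [max_as_half, hAdef]; ring
  have hmax0 : 0 ≤ (x 0 + x 1) / 2 + A / 2 := by linarith
  apply lt_of_lt_of_le ?_ h1
  apply max_lt
  · rw [hmax]; exact hkey
  · linarith
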